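/- For every non-empty graph G, exactly one of the following four cases holds (all equalities up to isomorphism): (i) G is a single-vertex graph; (ii) G = A ⅋ B for some non-empty graphs A and B; (iii) G = A ⊗ B for some non-empty graphs A and B; (iv) G = P⟨A1, …, An⟩ for some prime graph P with n = |V(P)| ≥ 4 and non-empty graphs A1, …, An. -/

import Mathlib

namespace GSP

/-- Atoms: a propositional variable (coded by a natural number) with a polarity. -/
abbrev Atom := ℕ × Bool

/-- The dual atom. -/
def dualAtom (a : Atom) : Atom := (a.1, !a.2)

/-- A finite, simple, undirected graph whose vertices are labelled by atoms. -/
structure LGraph where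
  V : Type
  [fintype : Fintype V]
  adj : V → V → Prop
  symm : ∀ {v w : V}, adj v w → adj w v
  irrefl : ∀ v : V, ¬ adj v v
  label : V → Atom

attribute [instance] LGraph.fintype

namespace LGraph

/-- An isomorphism of labelled graphs: a vertex bijection preserving labels and
preserving and reflecting edges. -/
structure Iso (G H : LGraph) where
  toEquiv : G.V ≃ H.V
  adj_iff : ∀ v w : G.V, G.adj v w ↔ H.adj (toEquiv v) (toEquiv w)
  label_eq : ∀ v : G.V, H.label (toEquiv v) = G.label v

/-- `G ≅ H` : the graphs `G` and `H` are isomorphic. -/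
def iso (G H : LGraph) : Prop := Nonempty (Iso G H)

/-- The empty graph. -/
def empty : LGraph where
  V := Empty
  adj _ _ := False
  symm h := h.elim
  irrefl v := v.elim
  label v := v.elim

/-- The single-vertex graph labelled by the atom `a`. -/
def single (a : Atom) : LGraph where
  V := Unit
  adj _ _ := False
  symm h := h.elim
  irrefl _ h := h
  label _ := a

def parAdj (G H : LGraph) : G.V ⊕ H.V → G.V ⊕ H.V → Prop
  | .inl a, .inl b => G.adj a b
  | .inr a, .inr b => H.adj a b
  | _, _ => False

/-- The par `G ⅋ H` : disjoint union of `G` and `H`. -/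
def par (G H : LGraph) : LGraph where
  V := G.V ⊕ H.V
  adj := parAdj G H
  symm := by
    rintro (a | a) (b | b) h
    · exact G.symm h
    · exact h.elim
    · exact h.elim
    · exact H.symm h
  irrefl := by
    rintro (a | a) h
    · exact G.irrefl a h
    · exact H.irrefl a h
  label := Sum.elim G.label H.label

def tensorAdj (G H : LGraph) : G.V ⊕ H.V → G.V ⊕ H.V → Prop
  | .inl a, .inl b => G.adj a b
  | .inr a, .inr b => H.adj a b
  | .inl _, .inr _ => True
  | .inr _, .inl _ => True

/-- The tensor `G ⊗ H` : join of `G` and `H` (disjoint union plus all edges in between). -/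
def tensor (G H : LGraph) : LGraph where
  V := G.V ⊕ H.V
  adj := tensorAdj G H
  symm := by
    rintro (a | a) (b | b) h
    · exact G.symm h
    · exact trivial
    · exact trivial
    · exact H.symm h
  irrefl := by
    rintro (a | a) h
    · exact G.irrefl a h
    · exact H.irrefl a h
  label := Sum.elim G.label H.label

/-- The dual graph `Ḡ` : same vertices, complemented edges, dualized labels. -/
def dual (G : LGraph) : LGraph where
  V := G.V
  adj v w := v ≠ w ∧ ¬ G.adj v w
  symm h := ⟨fun e => h.1 e.symm, fun h' => h.2 (G.symm h')⟩
  irrefl _ h := h.1 rfl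
  label v := dualAtom (G.label v)

def plugAdj (C : LGraph) (R : Set C.V) (X : LGraph) : C.V ⊕ X.V → C.V ⊕ X.V → Prop
  | .inl a, .inl b => C.adj a b
  | .inr a, .inr b => X.adj a b
  | .inl a, .inr _ => a ∈ R
  | .inr _, .inl b => b ∈ R

/-- `C[X]_R` : the graph obtained from the context `C[·]_R` by inserting the graph `X`
as a module whose vertices are adjacent exactly to the vertices in `R`. -/
def plug (C : LGraph) (R : Set C.V) (X : LGraph) : LGraph where
  V := C.V ⊕ X.V
  adj := plugAdj C R X
  symm := by
    rintro (a | a) (b | b) h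
    · exact C.symm h
    · exact h
    · exact h
    · exact X.symm h
  irrefl := by
    rintro (a | a) h
    · exact C.irrefl a h
    · exact X.irrefl a h
  label := Sum.elim C.label X.label

def compAdj (G : LGraph) (H : G.V → LGraph) :
    (Σ v : G.V, (H v).V) → (Σ v : G.V, (H v).V) → Prop := fun x y =>
  (∃ (v : G.V) (a b : (H v).V), x = ⟨v, a⟩ ∧ y = ⟨v, b⟩ ∧ (H v).adj a b) ∨
    (x.1 ≠ y.1 ∧ G.adj x.1 y.1)

/-- The composition `G⟨H v₁, …, H vₙ⟩` of the family `H` via the graph `G`: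
replace each vertex `v` of `G` by the graph `H v`. -/
def comp (G : LGraph) (H : G.V → LGraph) : LGraph where
  V := Σ v : G.V, (H v).V
  adj := compAdj G H
  symm := by
    rintro x y (⟨v, a, b, hx, hy, hab⟩ | ⟨hne, hadj⟩)
    · exact Or.inl ⟨v, b, a, hy, hx, (H v).symm hab⟩
    · exact Or.inr ⟨hne.symm, G.symm hadj⟩
  irrefl := by
    rintro ⟨v, a⟩ (⟨w, x, y, hx, hy, hxy⟩ | ⟨hne, _⟩)
    · have h := hx.symm.trans hy
      obtain rfl : x = y := by simpa using h
      exact (H w).irrefl x hxy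
    · exact hne rfl
  label x := (H x.1).label x.2

/-- A module of `G` : a set `M` of vertices such that every vertex outside `M`
is adjacent either to all vertices of `M` or to none of them. -/
def IsModule (G : LGraph) (M : Set G.V) : Prop :=
  ∀ v ∉ M, ∀ x ∈ M, ∀ y ∈ M, (G.adj v x ↔ G.adj v y)

/-- A prime graph: at least 2 vertices and only trivial modules. -/
def Prime (G : LGraph) : Prop :=
  2 ≤ Fintype.card G.V ∧
    ∀ M : Set G.V, G.IsModule M → M = ∅ ∨ (∃ v, M = {v}) ∨ M = Set.univ

/-- `G` is `P₄`-free: no four distinct vertices induce a path on 4 vertices. -/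
def P4Free (G : LGraph) : Prop :=
  ¬ ∃ v₁ v₂ v₃ v₄ : G.V,
      v₁ ≠ v₂ ∧ v₁ ≠ v₃ ∧ v₁ ≠ v₄ ∧ v₂ ≠ v₃ ∧ v₂ ≠ v₄ ∧ v₃ ≠ v₄ ∧
      G.adj v₁ v₂ ∧ G.adj v₂ v₃ ∧ G.adj v₃ v₄ ∧
      ¬ G.adj v₁ v₃ ∧ ¬ G.adj v₁ v₄ ∧ ¬ G.adj v₂ v₄

end LGraph

open LGraph

/-- The `n`-fold tensor `X₁ ⊗ ⋯ ⊗ Xₙ`. -/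
def bigTensor : (n : ℕ) → (Fin n → LGraph) → LGraph
  | 0, _ => LGraph.empty
  | n + 1, F => (F 0).tensor (bigTensor n fun i => F i.succ)

/-- The `n`-fold par `X₁ ⅋ ⋯ ⅋ Xₙ`. -/
def bigPar : (n : ℕ) → (Fin n → LGraph) → LGraph
  | 0, _ => LGraph.empty
  | n + 1, F => (F 0).par (bigPar n fun i => F i.succ)

/-- The inference rules of system GS (premise, conclusion). -/
inductive GSRule : LGraph → LGraph → Prop
  /-- ai↓ : premise `∅`, conclusion `ā ⅋ a`. -/
  | ai (a : Atom) : GSRule LGraph.empty ((single (dualAtom a)).par (single a))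
  /-- ss↓ : premise `B[A]_S`, conclusion `B ⅋ A`, for `A ≠ ∅` and `S ≠ ∅`. -/
  | ss (A B : LGraph) (S : Set B.V) :
      Nonempty A.V → S ≠ ∅ → GSRule (B.plug S A) (B.par A)
  /-- p↓ : premise `(M₁ ⅋ N₁) ⊗ ⋯ ⊗ (Mₙ ⅋ Nₙ)`, conclusion `P̄⟨M₁,…,Mₙ⟩ ⅋ P⟨N₁,…,Nₙ⟩`,
  for `P` prime with `n = |V(P)| ≥ 4` and all `Mᵢ ≠ ∅`. -/
  | p (n : ℕ) (P : LGraph) (e : P.V ≃ Fin n) (M N : Fin n → LGraph) :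
      P.Prime → 4 ≤ n → (∀ i, Nonempty (M i).V) →
      GSRule (bigTensor n fun i => (M i).par (N i))
        ((P.dual.comp fun v => M (e v)).par (P.comp fun v => N (e v)))

/-- The "up" rules ai↑, ss↑, p↑ (premise, conclusion). -/
inductive UpRule : LGraph → LGraph → Prop
  /-- ai↑ : premise `a ⊗ ā`, conclusion `∅`. -/
  | ai (a : Atom) : UpRule ((single a).tensor (single (dualAtom a))) LGraph.empty
  /-- ss↑ : premise `B ⊗ A`, conclusion `B[A]_S`, for `A ≠ ∅` and `S ≠ V(B)`. -/
  | ss (A B : LGraph) (S : Set B.V) :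
      Nonempty A.V → S ≠ Set.univ → UpRule (B.tensor A) (B.plug S A)
  /-- p↑ : premise `P⟨M₁,…,Mₙ⟩ ⊗ P̄⟨N₁,…,Nₙ⟩`, conclusion `(M₁ ⊗ N₁) ⅋ ⋯ ⅋ (Mₙ ⊗ Nₙ)`,
  for `P` prime with `n = |V(P)| ≥ 4` and all `Mᵢ ≠ ∅`. -/
  | p (n : ℕ) (P : LGraph) (e : P.V ≃ Fin n) (M N : Fin n → LGraph) :
      P.Prime → 4 ≤ n → (∀ i, Nonempty (M i).V) →
      UpRule ((P.comp fun v => M (e v)).tensor (P.dual.comp fun v => N (e v)))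
        (bigPar n fun i => (M i).tensor (N i))

/-- The rules of system SGS : the rules of GS together with their duals. -/
def SGSRule (G H : LGraph) : Prop := GSRule G H ∨ UpRule G H

/-- A single inference step in a system: inside some context, replace a module
isomorphic to the premise of a rule by the corresponding conclusion. -/
def Step (Rules : LGraph → LGraph → Prop) (G H : LGraph) : Prop :=
  ∃ (C : LGraph) (R : Set C.V) (p c : LGraph),
    Rules p c ∧ G.iso (C.plug R p) ∧ H.iso (C.plug R c)

/-- A derivation in a system from `G` to `H` : a finite sequence of inference steps
and isomorphisms leading from `G` to `H`. -/
def Deriv (Rules : LGraph → LGraph → Prop) (G H : LGraph) : Prop :=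
  Relation.ReflTransGen (fun X Y => X.iso Y ∨ Step Rules X Y) G H

/-- A graph is provable in a system if there is a derivation from `∅` to it. -/
def Provable (Rules : LGraph → LGraph → Prop) (G : LGraph) : Prop :=
  Deriv Rules LGraph.empty G

/-- Formulas: unit, positive and negative atoms, par and tensor. -/
inductive Formula where
  | unit : Formula
  | pos (a : ℕ) : Formula
  | neg (a : ℕ) : Formula
  | par (φ ψ : Formula) : Formula
  | tens (φ ψ : Formula) : Formula

/-- The graph `[φ]` of a formula `φ`. -/
def Formula.graph : Formula → LGraph
  | .unit => LGraph.empty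
  | .pos a => single (a, true)
  | .neg a => single (a, false)
  | .par φ ψ => φ.graph.par ψ.graph
  | .tens φ ψ => φ.graph.tensor ψ.graph

/-- Structural equivalence of formulas: the smallest congruence making `⅋` and `⊗`
associative and commutative with unit `∘`. -/
inductive Formula.equiv : Formula → Formula → Prop
  | refl (φ) : Formula.equiv φ φ
  | symm {φ ψ} : Formula.equiv φ ψ → Formula.equiv ψ φ
  | trans {φ ψ χ} : Formula.equiv φ ψ → Formula.equiv ψ χ → Formula.equiv φ χ
  | parComm (φ ψ) : Formula.equiv (.par φ ψ) (.par ψ φ)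
  | parAssoc (φ ψ χ) : Formula.equiv (.par φ (.par ψ χ)) (.par (.par φ ψ) χ)
  | parUnit (φ) : Formula.equiv (.par φ .unit) φ
  | tensComm (φ ψ) : Formula.equiv (.tens φ ψ) (.tens ψ φ)
  | tensAssoc (φ ψ χ) : Formula.equiv (.tens φ (.tens ψ χ)) (.tens (.tens φ ψ) χ)
  | tensUnit (φ) : Formula.equiv (.tens φ .unit) φ
  | parCongr {φ φ' ψ ψ'} : Formula.equiv φ φ' → Formula.equiv ψ ψ' →
      Formula.equiv (.par φ ψ) (.par φ' ψ')
  | tensCongr {φ φ' ψ ψ'} : Formula.equiv φ φ' → Formula.equiv ψ ψ' →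
      Formula.equiv (.tens φ ψ) (.tens φ' ψ')

/-- A formula is unit-free if it contains no occurrence of the unit `∘`. -/
def Formula.UnitFree : Formula → Prop
  | .unit => False
  | .pos _ => True
  | .neg _ => True
  | .par φ ψ => φ.UnitFree ∧ ψ.UnitFree
  | .tens φ ψ => φ.UnitFree ∧ ψ.UnitFree

/-- The sequent calculus MLL° (multiplicative linear logic with mix) on multisets
of formulas. -/
inductive MLL : Multiset Formula → Prop
  | ax (a : ℕ) : MLL {Formula.pos a, Formula.neg a}
  | tens {Γ Δ : Multiset Formula} (φ ψ : Formula) :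
      MLL (φ ::ₘ Γ) → MLL (ψ ::ₘ Δ) → MLL (Formula.tens φ ψ ::ₘ (Γ + Δ))
  | par {Γ : Multiset Formula} (φ ψ : Formula) :
      MLL (φ ::ₘ ψ ::ₘ Γ) → MLL (Formula.par φ ψ ::ₘ Γ)
  | mix {Γ Δ : Multiset Formula} : MLL Γ → MLL Δ → MLL (Γ + Δ)

/-- Case (i): `G` is a single-vertex graph. -/
def CaseSingleton (G : LGraph) : Prop := ∃ a : Atom, G.iso (single a)

/-- Case (ii): `G = A ⅋ B` with `A`, `B` non-empty (up to isomorphism). -/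
def CasePar (G : LGraph) : Prop :=
  ∃ A B : LGraph, Nonempty A.V ∧ Nonempty B.V ∧ G.iso (A.par B)

/-- Case (iii): `G = A ⊗ B` with `A`, `B` non-empty (up to isomorphism). -/
def CaseTensor (G : LGraph) : Prop :=
  ∃ A B : LGraph, Nonempty A.V ∧ Nonempty B.V ∧ G.iso (A.tensor B)

/-- Case (iv): `G = P⟨A₁, …, Aₙ⟩` for a prime graph `P` with `n = |V(P)| ≥ 4`
and non-empty graphs `A₁, …, Aₙ` (up to isomorphism). -/
def CasePrime (G : LGraph) : Prop :=
  ∃ (n : ℕ) (P : LGraph) (e : P.V ≃ Fin n) (A : Fin n → LGraph),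
    P.Prime ∧ 4 ≤ n ∧ (∀ i, Nonempty (A i).V) ∧ G.iso (P.comp fun v => A (e v))

/-! ### Auxiliary development for the modular decomposition theorem -/

open Relation Classical

noncomputable section AuxMD

namespace LGraph

/-- Symmetry of isomorphisms. -/
def Iso.symm' {G H : LGraph} (f : Iso G H) : Iso H G where
  toEquiv := f.toEquiv.symm
  adj_iff v w := by
    rw [f.adj_iff (f.toEquiv.symm v) (f.toEquiv.symm w)]
    simp
  label_eq v := by
    have := (f.label_eq (f.toEquiv.symm v)).symm
    simpa using this

lemma iso_card {G H : LGraph} (f : Iso G H) : Fintype.card G.V = Fintype.card H.V :=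
  Fintype.card_congr f.toEquiv

/-- Co-adjacency (adjacency in the complement). -/
def CoAdj (G : LGraph) (v w : G.V) : Prop := v ≠ w ∧ ¬ G.adj v w

lemma CoAdj.symm' {G : LGraph} {v w : G.V} (h : G.CoAdj v w) : G.CoAdj w v :=
  ⟨h.1.symm, fun h' => h.2 (G.symm h')⟩

/-- `G` is disconnected by a set with no crossing edges. -/
def Disc (G : LGraph) : Prop :=
  ∃ S : Set G.V, S.Nonempty ∧ Sᶜ.Nonempty ∧ ∀ v ∈ S, ∀ w ∈ Sᶜ, ¬ G.adj v w

/-- The complement of `G` is disconnected: all crossing edges present. -/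
def CoDisc (G : LGraph) : Prop :=
  ∃ S : Set G.V, S.Nonempty ∧ Sᶜ.Nonempty ∧ ∀ v ∈ S, ∀ w ∈ Sᶜ, G.adj v w

def Conn (G : LGraph) : Prop := ∀ v w : G.V, ReflTransGen G.adj v w

def CoConn (G : LGraph) : Prop := ∀ v w : G.V, ReflTransGen G.CoAdj v w

lemma disc_of_iso {G H : LGraph} (f : Iso G H) (h : Disc G) : Disc H := by
  obtain ⟨S, ⟨s, hs⟩, ⟨s', hs'⟩, hS⟩ := h
  refine ⟨{w | f.toEquiv.symm w ∈ S}, ⟨f.toEquiv s, by simpa⟩,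
    ⟨f.toEquiv s', by simpa⟩, ?_⟩
  intro v hv w hw
  have hiff := f.adj_iff (f.toEquiv.symm v) (f.toEquiv.symm w)
  simp only [Equiv.apply_symm_apply] at hiff
  exact fun hadj => hS _ hv _ hw (hiff.mpr hadj)

lemma codisc_of_iso {G H : LGraph} (f : Iso G H) (h : CoDisc G) : CoDisc H := by
  obtain ⟨S, ⟨s, hs⟩, ⟨s', hs'⟩, hS⟩ := h
  refine ⟨{w | f.toEquiv.symm w ∈ S}, ⟨f.toEquiv s, by simpa⟩,
    ⟨f.toEquiv s', by simpa⟩, ?_⟩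
  intro v hv w hw
  have hiff := f.adj_iff (f.toEquiv.symm v) (f.toEquiv.symm w)
  simp only [Equiv.apply_symm_apply] at hiff
  exact hiff.mp (hS _ hv _ hw)

lemma reach_closed {G : LGraph} {S : Set G.V}
    (hS : ∀ v ∈ S, ∀ w ∈ Sᶜ, ¬ G.adj v w) {x y : G.V}
    (h : ReflTransGen G.adj x y) (hx : x ∈ S) : y ∈ S := by
  induction h with
  | refl => exact hx
  | tail _ hbc ih =>
      by_contra hc
      exact hS _ ih _ hc hbc

lemma coreach_closed {G : LGraph} {S : Set G.V}
    (hS : ∀ v ∈ S, ∀ w ∈ Sᶜ, G.adj v w) {x y : G.V}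
    (h : ReflTransGen G.CoAdj x y) (hx : x ∈ S) : y ∈ S := by
  induction h with
  | refl => exact hx
  | tail _ hbc ih =>
      by_contra hc
      exact hbc.2 (hS _ ih _ hc)

lemma Conn.not_disc {G : LGraph} (h : Conn G) : ¬ Disc G := by
  rintro ⟨S, ⟨s, hs⟩, ⟨s', hs'⟩, hS⟩
  exact hs' (reach_closed hS (h s s') hs)

lemma CoConn.not_codisc {G : LGraph} (h : CoConn G) : ¬ CoDisc G := by
  rintro ⟨S, ⟨s, hs⟩, ⟨s', hs'⟩, hS⟩
  exact hs' (coreach_closed hS (h s s') hs)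

lemma conn_of_not_disc {G : LGraph} (h : ¬ Disc G) : Conn G := by
  intro v w
  by_contra hw
  refine h ⟨{x | ReflTransGen G.adj v x}, ⟨v, ReflTransGen.refl⟩, ⟨w, hw⟩, ?_⟩
  intro a ha b hb hadj
  exact hb (ha.tail hadj)

lemma coconn_of_not_codisc {G : LGraph} (h : ¬ CoDisc G) : CoConn G := by
  intro v w
  by_contra hw
  refine h ⟨{x | ReflTransGen G.CoAdj v x}, ⟨v, ReflTransGen.refl⟩, ⟨w, hw⟩, ?_⟩
  intro a ha b hb
  by_contra hadj
  have hne : a ≠ b := fun h' => hb (h' ▸ ha)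
  exact hb (ha.tail ⟨hne, hadj⟩)

lemma not_disc_codisc (G : LGraph) : ¬ (Disc G ∧ CoDisc G) := by
  rintro ⟨⟨S, ⟨s, hs⟩, ⟨s', hs'⟩, hS⟩, ⟨T, ⟨t, ht⟩, ⟨t', ht'⟩, hT⟩⟩
  by_cases hsT : s ∈ T <;> by_cases hs'T : s' ∈ T
  · -- both in T; use t' ∈ Tᶜ
    by_cases ht'S : t' ∈ S
    · exact hS _ ht'S _ hs' (G.symm (hT _ hs'T _ ht'))
    · exact hS _ hs _ ht'S (hT _ hsT _ ht')
  · exact hS _ hs _ hs' (hT _ hsT _ hs'T)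
  · exact hS _ hs _ hs' (G.symm (hT _ hs'T _ hsT))
  · -- both in Tᶜ; use t ∈ T
    by_cases htS : t ∈ S
    · exact hS _ htS _ hs' (hT _ ht _ hs'T)
    · exact hS _ hs _ htS (G.symm (hT _ ht _ hsT))

/-- Induced subgraph on a predicate. -/
def inducedP (G : LGraph) (p : G.V → Prop) : LGraph where
  V := {v : G.V // p v}
  fintype := Fintype.ofFinite _
  adj a b := G.adj a.1 b.1
  symm h := G.symm h
  irrefl a := G.irrefl a.1
  label a := G.label a.1

end LGraph

end AuxMD

noncomputable section AuxMD2
open Relation Classical LGraph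

lemma caseSingleton_iff_card {G : LGraph} (hG : Nonempty G.V) :
    CaseSingleton G ↔ Fintype.card G.V = 1 := by
  constructor
  · rintro ⟨a, ⟨f⟩⟩
    have := iso_card f
    exact this.trans (Fintype.card_eq_one_iff.mpr ⟨(), fun _ => rfl⟩)
  · intro h
    obtain ⟨x, hx⟩ := Fintype.card_eq_one_iff.mp h
    refine ⟨G.label x, ⟨⟨⟨fun _ => (), fun _ => x, fun v => (hx v).symm, fun _ => rfl⟩, ?_, ?_⟩⟩⟩
    · intro v w
      have hv := hx v; have hw := hx w
      subst hv; subst hw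
      simp [single, G.irrefl]
    · intro v
      have hv := hx v; subst hv; rfl

def splitEquiv (G : LGraph) (p : G.V → Prop) : G.V ≃ ({v // p v} ⊕ {v // ¬ p v}) where
  toFun v := if h : p v then .inl ⟨v, h⟩ else .inr ⟨v, h⟩
  invFun := Sum.elim Subtype.val Subtype.val
  left_inv v := by by_cases h : p v <;> simp [h]
  right_inv x := by rcases x with ⟨a, h⟩ | ⟨a, h⟩ <;> simp [h]

lemma splitEquiv_pos (G : LGraph) (p : G.V → Prop) {v} (h : p v) :
    splitEquiv G p v = .inl ⟨v, h⟩ := dif_pos h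

lemma splitEquiv_neg (G : LGraph) (p : G.V → Prop) {v} (h : ¬ p v) :
    splitEquiv G p v = .inr ⟨v, h⟩ := dif_neg h

lemma casePar_iff_disc {G : LGraph} : CasePar G ↔ Disc G := by
  constructor
  · rintro ⟨A, B, ⟨a⟩, ⟨b⟩, ⟨f⟩⟩
    refine disc_of_iso f.symm' ⟨{x : A.V ⊕ B.V | x.isLeft}, ⟨.inl a, rfl⟩, ⟨.inr b, Bool.false_ne_true⟩, ?_⟩
    rintro (v | v) hv (w | w) hw hadj
    · exact hw rfl
    · exact hadj
    · exact Bool.false_ne_true hv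
    · exact Bool.false_ne_true hv
  · rintro ⟨S, ⟨s, hs⟩, ⟨s', hs'⟩, hS⟩
    refine ⟨G.inducedP (· ∈ S), G.inducedP (· ∉ S), ⟨⟨s, hs⟩⟩, ⟨⟨s', hs'⟩⟩,
      ⟨Iso.symm' ⟨(splitEquiv G (· ∈ S)).symm, ?_, ?_⟩⟩⟩
    · rintro (⟨a, ha⟩ | ⟨a, ha⟩) (⟨b, hb⟩ | ⟨b, hb⟩)
      · exact Iff.rfl
      · exact iff_of_false (fun h => h) (hS a ha b hb)
      · exact iff_of_false (fun h => h) (fun h => hS b hb a ha (G.symm h))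
      · exact Iff.rfl
    · rintro (⟨a, ha⟩ | ⟨a, ha⟩) <;> rfl

lemma caseTensor_iff_codisc {G : LGraph} : CaseTensor G ↔ CoDisc G := by
  constructor
  · rintro ⟨A, B, ⟨a⟩, ⟨b⟩, ⟨f⟩⟩
    refine codisc_of_iso f.symm' ⟨{x : A.V ⊕ B.V | x.isLeft}, ⟨.inl a, rfl⟩, ⟨.inr b, Bool.false_ne_true⟩, ?_⟩
    rintro (v | v) hv (w | w) hw
    · exact absurd rfl hw
    · exact trivial
    · exact (Bool.false_ne_true hv).elim
    · exact (Bool.false_ne_true hv).elim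
  · rintro ⟨S, ⟨s, hs⟩, ⟨s', hs'⟩, hS⟩
    refine ⟨G.inducedP (· ∈ S), G.inducedP (· ∉ S), ⟨⟨s, hs⟩⟩, ⟨⟨s', hs'⟩⟩,
      ⟨Iso.symm' ⟨(splitEquiv G (· ∈ S)).symm, ?_, ?_⟩⟩⟩
    · rintro (⟨a, ha⟩ | ⟨a, ha⟩) (⟨b, hb⟩ | ⟨b, hb⟩)
      · exact Iff.rfl
      · exact iff_of_true trivial (hS a ha b hb)
      · exact iff_of_true trivial (G.symm (hS b hb a ha))
      · exact Iff.rfl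
    · rintro (⟨a, ha⟩ | ⟨a, ha⟩) <;> rfl

lemma casePar_card {G : LGraph} (h : CasePar G) : 2 ≤ Fintype.card G.V := by
  obtain ⟨A, B, ⟨a⟩, ⟨b⟩, ⟨f⟩⟩ := h
  rw [iso_card f]
  have : (Sum.inl a : A.V ⊕ B.V) ≠ Sum.inr b := by simp
  exact Fintype.one_lt_card_iff.mpr ⟨_, _, this⟩

lemma caseTensor_card {G : LGraph} (h : CaseTensor G) : 2 ≤ Fintype.card G.V := by
  obtain ⟨A, B, ⟨a⟩, ⟨b⟩, ⟨f⟩⟩ := h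
  rw [iso_card f]
  have : (Sum.inl a : A.V ⊕ B.V) ≠ Sum.inr b := by simp
  exact Fintype.one_lt_card_iff.mpr ⟨_, _, this⟩

lemma casePrime_card {G : LGraph} (h : CasePrime G) : 2 ≤ Fintype.card G.V := by
  obtain ⟨n, P, e, A, hP, h4, hA, ⟨f⟩⟩ := h
  rw [iso_card f]
  have h01 : (e.symm ⟨0, by omega⟩ : P.V) ≠ e.symm ⟨1, by omega⟩ := by
    intro h
    have := e.symm.injective h
    simp [Fin.ext_iff] at this
  obtain ⟨a⟩ := hA (e (e.symm ⟨0, by omega⟩))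
  obtain ⟨b⟩ := hA (e (e.symm ⟨1, by omega⟩))
  refine Fintype.one_lt_card_iff.mpr ⟨⟨_, a⟩, ⟨_, b⟩, ?_⟩
  intro hcon
  exact h01 (congrArg Sigma.fst hcon)

end AuxMD2

noncomputable section AuxMD3
open Relation Classical LGraph

/-- Abstract lemma: reachability in a composition-like structure. -/
lemma comp_reach {ι : Type} {F : ι → Type} (R : ι → ι → Prop)
    (Q : (Σ i, F i) → (Σ i, F i) → Prop)
    (hsym : ∀ {v w}, R v w → R w v) (hirr : ∀ v, ¬ R v v)
    (hQ : ∀ (v w : ι) (a : F v) (b : F w), R v w → Q ⟨v, a⟩ ⟨w, b⟩)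
    (hconn : ∀ v w, ReflTransGen R v w) (hnontriv : ∃ v w : ι, v ≠ w)
    (hne : ∀ i, Nonempty (F i)) :
    ∀ x y, ReflTransGen Q x y := by
  have neigh : ∀ v : ι, ∃ w, R v w := by
    intro v
    obtain ⟨p, q, hpq⟩ := hnontriv
    have hu : ∃ u : ι, u ≠ v := by
      by_cases hp : p = v
      · exact ⟨q, by rw [← hp]; exact hpq.symm⟩
      · exact ⟨p, hp⟩
    obtain ⟨u, hu⟩ := hu
    rcases (hconn v u).cases_head with h | ⟨c, hc, _⟩
    · exact absurd h.symm hu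
    · exact ⟨c, hc⟩
  have cross : ∀ (w : ι) (b : F w) (v : ι), ReflTransGen R v w → v ≠ w →
      ∀ a : F v, ReflTransGen Q ⟨v, a⟩ ⟨w, b⟩ := by
    intro w b v h
    induction h using ReflTransGen.head_induction_on with
    | refl => intro h; exact absurd rfl h
    | @head v c h' _ ih =>
        intro _ a
        by_cases hc : c = w
        · subst hc; exact ReflTransGen.single (hQ _ _ a b h')
        · exact ReflTransGen.head (hQ _ _ a (hne c).some h') (ih hc _)
  intro ⟨v, a⟩ ⟨w, b⟩
  by_cases hvw : v = w
  · subst hvw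
    obtain ⟨u, hu⟩ := neigh v
    exact ReflTransGen.head (hQ _ _ a (hne u).some hu)
      (ReflTransGen.single (hQ _ _ _ b (hsym hu)))
  · exact cross w b v (hconn v w) hvw a

lemma prime_conn {P : LGraph} (hP : P.Prime) (h4 : 4 ≤ Fintype.card P.V) : Conn P := by
  intro v w
  by_contra hw
  set S : Set P.V := {x | ReflTransGen P.adj v x} with hSdef
  have hSmod : P.IsModule S := by
    intro u hu a ha b hb
    refine iff_of_false (fun h => hu (ha.tail ?_)) (fun h => hu (hb.tail ?_))
    · exact P.symm h
    · exact P.symm h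
  have hScmod : P.IsModule Sᶜ := by
    intro u hu a ha b hb
    have hu' : u ∈ S := not_not.mp hu
    exact iff_of_false (fun h => ha (hu'.tail h)) (fun h => hb (hu'.tail h))
  have hvS : v ∈ S := ReflTransGen.refl
  have hwS : w ∉ S := hw
  obtain ⟨x, hx⟩ : ∃ x, S = {x} := by
    rcases hP.2 S hSmod with h | h | h
    · exact absurd (h ▸ hvS) (Set.notMem_empty v)
    · exact h
    · exact absurd (h ▸ Set.mem_univ w) hwS
  obtain ⟨y, hy⟩ : ∃ y, Sᶜ = {y} := by
    rcases hP.2 Sᶜ hScmod with h | h | h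
    · exact absurd (h ▸ (hwS : w ∈ Sᶜ)) (Set.notMem_empty w)
    · exact h
    · exact absurd (h ▸ Set.mem_univ v : v ∈ Sᶜ) (not_not.mpr hvS)
  have hcover : ∀ z : P.V, z = x ∨ z = y := by
    intro z
    by_cases hz : z ∈ S
    · exact Or.inl (by rwa [hx] at hz)
    · exact Or.inr (by rw [← Set.mem_singleton_iff, ← hy]; exact hz)
  obtain ⟨z₁, z₂, z₃, h12, h13, h23⟩ := (Fintype.two_lt_card_iff (α := P.V)).mp (by omega)
  rcases hcover z₁ with rfl | rfl <;> rcases hcover z₂ with h2 | h2 <;>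
    rcases hcover z₃ with h3 | h3 <;> subst h2 <;> first
      | exact h12 rfl | exact h13 rfl | (subst h3; first | exact h12 rfl | exact h13 rfl | exact h23 rfl)

lemma prime_coconn {P : LGraph} (hP : P.Prime) (h4 : 4 ≤ Fintype.card P.V) : CoConn P := by
  intro v w
  by_contra hw
  set S : Set P.V := {x | ReflTransGen P.CoAdj v x} with hSdef
  have adj_of_out : ∀ u ∉ S, ∀ a ∈ S, P.adj u a := by
    intro u hu a ha
    by_contra hadj
    have hne : a ≠ u := fun h => hu (h ▸ ha)
    exact hu (ha.tail ⟨hne, fun h => hadj (P.symm h)⟩)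
  have hSmod : P.IsModule S := by
    intro u hu a ha b hb
    exact iff_of_true (adj_of_out u hu a ha) (adj_of_out u hu b hb)
  have hScmod : P.IsModule Sᶜ := by
    intro u hu a ha b hb
    have hu' : u ∈ S := not_not.mp hu
    have key : ∀ c ∈ Sᶜ, P.adj u c := by
      intro c hc
      by_contra hadj
      have hne : u ≠ c := fun h => hc (h ▸ hu')
      exact hc (hu'.tail ⟨hne, hadj⟩)
    exact iff_of_true (key a ha) (key b hb)
  have hvS : v ∈ S := ReflTransGen.refl
  have hwS : w ∉ S := hw
  obtain ⟨x, hx⟩ : ∃ x, S = {x} := by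
    rcases hP.2 S hSmod with h | h | h
    · exact absurd (h ▸ hvS) (Set.notMem_empty v)
    · exact h
    · exact absurd (h ▸ Set.mem_univ w) hwS
  obtain ⟨y, hy⟩ : ∃ y, Sᶜ = {y} := by
    rcases hP.2 Sᶜ hScmod with h | h | h
    · exact absurd (h ▸ (hwS : w ∈ Sᶜ)) (Set.notMem_empty w)
    · exact h
    · exact absurd (h ▸ Set.mem_univ v : v ∈ Sᶜ) (not_not.mpr hvS)
  have hcover : ∀ z : P.V, z = x ∨ z = y := by
    intro z
    by_cases hz : z ∈ S
    · exact Or.inl (by rwa [hx] at hz)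
    · exact Or.inr (by rw [← Set.mem_singleton_iff, ← hy]; exact hz)
  obtain ⟨z₁, z₂, z₃, h12, h13, h23⟩ := (Fintype.two_lt_card_iff (α := P.V)).mp (by omega)
  rcases hcover z₁ with rfl | rfl <;> rcases hcover z₂ with h2 | h2 <;>
    rcases hcover z₃ with h3 | h3 <;> subst h2 <;> first
      | exact h12 rfl | exact h13 rfl | (subst h3; first | exact h12 rfl | exact h13 rfl | exact h23 rfl)

lemma casePrime_not_disc_codisc {G : LGraph} (h : CasePrime G) : ¬ Disc G ∧ ¬ CoDisc G := by
  obtain ⟨n, P, e, A, hP, h4, hA, ⟨f⟩⟩ := h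
  have hcard : Fintype.card P.V = n := by
    rw [Fintype.card_congr e, Fintype.card_fin]
  have h4' : 4 ≤ Fintype.card P.V := by omega
  have hnontriv : ∃ v w : P.V, v ≠ w :=
    Fintype.one_lt_card_iff.mp (by omega)
  set X := P.comp fun v => A (e v) with hX
  have hconnX : Conn X := by
    apply comp_reach P.adj X.adj (fun h => P.symm h) P.irrefl ?_ (prime_conn hP h4') hnontriv
      (fun v => hA (e v))
    intro v w a b hvw
    exact Or.inr ⟨fun h => P.irrefl w ((show v = w from h) ▸ hvw), hvw⟩
  have hcoconnX : CoConn X := by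
    apply comp_reach P.CoAdj X.CoAdj (fun h => h.symm') (fun v h => h.1 rfl) ?_
      (prime_coconn hP h4') hnontriv (fun v => hA (e v))
    intro v w a b hvw
    refine ⟨fun h => hvw.1 (congrArg Sigma.fst h), ?_⟩
    rintro (⟨u, x, y, h1, h2, h3⟩ | ⟨hne, hadj⟩)
    · exact hvw.1 ((congrArg Sigma.fst h1).trans (congrArg Sigma.fst h2).symm)
    · exact hvw.2 hadj
  constructor
  · intro hd
    exact hconnX.not_disc (disc_of_iso f hd)
  · intro hd
    exact hcoconnX.not_codisc (codisc_of_iso f hd)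

end AuxMD3

noncomputable section AuxMD4
open Relation Classical LGraph

lemma four_le_card {α : Type} [Fintype α] {a b c d : α} (hab : a ≠ b) (hac : a ≠ c)
    (had : a ≠ d) (hbc : b ≠ c) (hbd : b ≠ d) (hcd : c ≠ d) : 4 ≤ Fintype.card α := by
  classical
  have h2 : ({c, d} : Finset α).card = 2 := by
    rw [Finset.card_insert_of_notMem (by simp [hcd]), Finset.card_singleton]
  have h3 : ({b, c, d} : Finset α).card = 3 := by
    rw [Finset.card_insert_of_notMem (by simp [hbc, hbd]), h2]
  have h4 : ({a, b, c, d} : Finset α).card = 4 := by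
    rw [Finset.card_insert_of_notMem (by simp [hab, hac, had]), h3]
  calc 4 = ({a, b, c, d} : Finset α).card := h4.symm
    _ ≤ _ := Finset.card_le_univ _

namespace MD

variable (G : LGraph)

def properMods (v : G.V) : Set (Set G.V) :=
  {M | G.IsModule M ∧ M ≠ Set.univ ∧ v ∈ M}

def Mod (v : G.V) : Set G.V := ⋃₀ properMods G v

lemma singleton_module (v : G.V) : G.IsModule {v} := by
  intro u _ a ha b hb
  rw [Set.mem_singleton_iff] at ha hb
  subst ha; subst hb; exact Iff.rfl

lemma singleton_mem_properMods (h2 : 2 ≤ Fintype.card G.V) (v : G.V) :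
    {v} ∈ properMods G v := by
  refine ⟨singleton_module G v, ?_, rfl⟩
  obtain ⟨a, b, hab⟩ := Fintype.one_lt_card_iff.mp (by omega : 1 < Fintype.card G.V)
  intro h
  have ha : a ∈ ({v} : Set G.V) := h ▸ Set.mem_univ a
  have hb : b ∈ ({v} : Set G.V) := h ▸ Set.mem_univ b
  rw [Set.mem_singleton_iff] at ha hb
  exact hab (ha.trans hb.symm)

lemma mem_Mod (h2 : 2 ≤ Fintype.card G.V) (v : G.V) : v ∈ Mod G v :=
  ⟨{v}, singleton_mem_properMods G h2 v, rfl⟩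

lemma Mod_isModule (v : G.V) : G.IsModule (Mod G v) := by
  intro u hu a ha b hb
  obtain ⟨Ma, hMa, haMa⟩ := ha
  obtain ⟨Mb, hMb, hbMb⟩ := hb
  have hua : u ∉ Ma := fun h => hu ⟨Ma, hMa, h⟩
  have hub : u ∉ Mb := fun h => hu ⟨Mb, hMb, h⟩
  calc G.adj u a ↔ G.adj u v := hMa.1 u hua a haMa v hMa.2.2
    _ ↔ G.adj u b := (hMb.1 u hub b hbMb v hMb.2.2).symm

lemma union_module {M N : Set G.V} (hM : G.IsModule M) (hN : G.IsModule N) {v : G.V}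
    (hvM : v ∈ M) (hvN : v ∈ N) : G.IsModule (M ∪ N) := by
  intro u hu a ha b hb
  have huM : u ∉ M := fun h => hu (Or.inl h)
  have huN : u ∉ N := fun h => hu (Or.inr h)
  have key : ∀ c ∈ M ∪ N, (G.adj u c ↔ G.adj u v) := by
    rintro c (hc | hc)
    · exact hM u huM c hc v hvM
    · exact hN u huN c hc v hvN
  exact (key a ha).trans (key b hb).symm

lemma union_proper (hc : Conn G) (hcc : CoConn G) {M N : Set G.V}
    (hM : G.IsModule M) (hN : G.IsModule N) (hMu : M ≠ Set.univ) (hNu : N ≠ Set.univ)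
    {v : G.V} (hvM : v ∈ M) (hvN : v ∈ N) : M ∪ N ≠ Set.univ := by
  intro heq
  by_cases hMN : M ⊆ N
  · exact hNu (by rwa [Set.union_eq_self_of_subset_left hMN] at heq)
  by_cases hNM : N ⊆ M
  · exact hMu (by rwa [Set.union_eq_self_of_subset_right hNM] at heq)
  obtain ⟨x, hxM, hxN⟩ := Set.not_subset.mp hMN
  obtain ⟨y, hyN, hyM⟩ := Set.not_subset.mp hNM
  have key1 : ∀ x', x' ∈ M → x' ∉ N → ∀ n ∈ N, (G.adj x' n ↔ G.adj x' v) :=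
    fun x' _ hx' n hn => hN x' hx' n hn v hvN
  have key2 : ∀ y', y' ∈ N → y' ∉ M → ∀ m ∈ M, (G.adj y' m ↔ G.adj y' v) :=
    fun y' _ hy' m hm => hM y' hy' m hm v hvM
  have symm_iff : ∀ a b : G.V, G.adj a b ↔ G.adj b a := fun a b => ⟨G.symm, G.symm⟩
  have hval : ∀ x', x' ∈ M → x' ∉ N → (G.adj x' v ↔ G.adj x v) := by
    intro x' hx'M hx'N
    calc G.adj x' v ↔ G.adj x' y := (key1 x' hx'M hx'N y hyN).symm
      _ ↔ G.adj y x' := symm_iff _ _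
      _ ↔ G.adj y v := key2 y hyN hyM x' hx'M
      _ ↔ G.adj y x := (key2 y hyN hyM x hxM).symm
      _ ↔ G.adj x y := symm_iff _ _
      _ ↔ G.adj x v := key1 x hxM hxN y hyN
  have hcompl : (M \ N)ᶜ = N := by
    ext z
    constructor
    · intro h
      rcases (Set.eq_univ_iff_forall.mp heq z) with hz | hz
      · by_contra hzN
        exact h ⟨hz, hzN⟩
      · exact hz
    · intro hz h'
      exact h'.2 hz
  have cross : ∀ p ∈ M \ N, ∀ n ∈ N, (G.adj p n ↔ G.adj x v) := by
    intro p hp n hn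
    exact (key1 p hp.1 hp.2 n hn).trans (hval p hp.1 hp.2)
  by_cases hε : G.adj x v
  · refine hcc.not_codisc ⟨M \ N, ⟨x, hxM, hxN⟩, ⟨v, by rw [hcompl]; exact hvN⟩, ?_⟩
    intro p hp n hn
    rw [hcompl] at hn
    exact (cross p hp n hn).mpr hε
  · refine hc.not_disc ⟨M \ N, ⟨x, hxM, hxN⟩, ⟨v, by rw [hcompl]; exact hvN⟩, ?_⟩
    intro p hp n hn
    rw [hcompl] at hn
    exact fun h => hε ((cross p hp n hn).mp h)

lemma Mod_proper (h2 : 2 ≤ Fintype.card G.V) (hc : Conn G) (hcc : CoConn G) (v : G.V) :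
    Mod G v ≠ Set.univ := by
  have hfin : (properMods G v).Finite := Set.toFinite _
  have hne : (properMods G v).Nonempty := ⟨{v}, singleton_mem_properMods G h2 v⟩
  obtain ⟨M₀, hM₀, hmax⟩ := Set.Finite.exists_maximalFor id _ hfin hne
  have hsub : Mod G v ⊆ M₀ := by
    apply Set.sUnion_subset
    intro N hN
    have hun : M₀ ∪ N ∈ properMods G v :=
      ⟨union_module G hM₀.1 hN.1 hM₀.2.2 hN.2.2,
       union_proper G hc hcc hM₀.1 hN.1 hM₀.2.1 hN.2.1 hM₀.2.2 hN.2.2, Or.inl hM₀.2.2⟩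
    have h := hmax hun Set.subset_union_left
    simp only [id] at h
    exact Set.subset_union_right.trans h
  intro h
  exact hM₀.2.1 (Set.eq_univ_of_univ_subset (h ▸ hsub))

lemma Mod_mem_properMods (h2 : 2 ≤ Fintype.card G.V) (hc : Conn G) (hcc : CoConn G)
    {v w : G.V} (hw : w ∈ Mod G v) : Mod G v ∈ properMods G w :=
  ⟨Mod_isModule G v, Mod_proper G h2 hc hcc v, hw⟩

lemma Mod_eq_of_mem (h2 : 2 ≤ Fintype.card G.V) (hc : Conn G) (hcc : CoConn G)
    {v w : G.V} (hw : w ∈ Mod G v) : Mod G w = Mod G v := by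
  have h1 : Mod G v ⊆ Mod G w :=
    Set.subset_sUnion_of_mem (Mod_mem_properMods G h2 hc hcc hw)
  have hvw : v ∈ Mod G w := h1 (mem_Mod G h2 v)
  have h2' : Mod G w ⊆ Mod G v :=
    Set.subset_sUnion_of_mem (Mod_mem_properMods G h2 hc hcc hvw)
  exact Set.Subset.antisymm h2' h1

def modSetoid (h2 : 2 ≤ Fintype.card G.V) (hc : Conn G) (hcc : CoConn G) :
    Setoid G.V where
  r v w := w ∈ Mod G v
  iseqv := by
    refine ⟨mem_Mod G h2, ?_, ?_⟩
    · intro v w h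
      rw [Mod_eq_of_mem G h2 hc hcc h]
      exact mem_Mod G h2 v
    · intro v w u h1 h2'
      rw [← Mod_eq_of_mem G h2 hc hcc h1]
      exact h2'

end MD
end AuxMD4

noncomputable section AuxMD5
open Relation Classical LGraph

namespace MD

variable (G : LGraph) (h2 : 2 ≤ Fintype.card G.V) (hc : Conn G) (hcc : CoConn G)

/-- The quotient graph by maximal proper modules. -/
def Pq : LGraph where
  V := Quotient (modSetoid G h2 hc hcc)
  fintype := Fintype.ofFinite _
  adj q r := q ≠ r ∧ G.adj q.out r.out
  symm h := ⟨h.1.symm, G.symm h.2⟩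
  irrefl q h := h.1 rfl
  label _ := (0, true)

local notation "mk" => Quotient.mk (modSetoid G h2 hc hcc)

lemma mk_eq_iff {v w : G.V} : mk v = mk w ↔ w ∈ Mod G v := by
  rw [Quotient.eq]
  exact Iff.rfl

include h2 hc hcc

lemma adj_congr {v w v' w' : G.V} (hvw : w ∉ Mod G v)
    (hv' : v' ∈ Mod G v) (hw' : w' ∈ Mod G w) : G.adj v' w' ↔ G.adj v w := by
  have hv'w : v' ∉ Mod G w := by
    intro h
    have e1 : Mod G v' = Mod G w := Mod_eq_of_mem G h2 hc hcc h
    have e2 : Mod G v' = Mod G v := Mod_eq_of_mem G h2 hc hcc hv'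
    exact hvw (e2 ▸ e1.symm ▸ mem_Mod G h2 w)
  calc G.adj v' w' ↔ G.adj v' w := Mod_isModule G w v' hv'w w' hw' w (mem_Mod G h2 w)
    _ ↔ G.adj w v' := ⟨G.symm, G.symm⟩
    _ ↔ G.adj w v := Mod_isModule G v w hvw v' hv' v (mem_Mod G h2 v)
    _ ↔ G.adj v w := ⟨G.symm, G.symm⟩

lemma out_mem_Mod (v : G.V) : (mk v).out ∈ Mod G v := by
  have h := Quotient.mk_out (s := modSetoid G h2 hc hcc) v
  exact (modSetoid G h2 hc hcc).symm h

lemma Pq_adj_iff {v w : G.V} (hvw : w ∉ Mod G v) :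
    (Pq G h2 hc hcc).adj (mk v) (mk w) ↔ G.adj v w := by
  have hne : mk v ≠ mk w := fun h => hvw ((mk_eq_iff G h2 hc hcc).mp h)
  constructor
  · rintro ⟨_, hadj⟩
    exact (adj_congr G h2 hc hcc hvw (out_mem_Mod G h2 hc hcc v)
      (out_mem_Mod G h2 hc hcc w)).mp hadj
  · intro hadj
    exact ⟨hne, (adj_congr G h2 hc hcc hvw (out_mem_Mod G h2 hc hcc v)
      (out_mem_Mod G h2 hc hcc w)).mpr hadj⟩

lemma Pq_trivial_modules (S : Set (Pq G h2 hc hcc).V) (hS : (Pq G h2 hc hcc).IsModule S) :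
    S = ∅ ∨ (∃ q, S = {q}) ∨ S = Set.univ := by
  by_contra hcon
  push_neg at hcon
  obtain ⟨hS0, hS1, hSu⟩ := hcon
  have hSne : S.Nonempty := by first | exact hS0 | exact Set.nonempty_iff_ne_empty.mpr hS0
  obtain ⟨q, hq⟩ := hSne
  obtain ⟨r, hrS, hrq⟩ : ∃ r ∈ S, r ≠ q := by
    by_contra h
    push_neg at h
    exact hS1 q (Set.eq_singleton_iff_unique_mem.mpr ⟨hq, h⟩)
  -- lift S to a module of G
  set T : Set G.V := {x | mk x ∈ S} with hTdef
  have hT : G.IsModule T := by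
    intro u hu a ha b hb
    have hua : mk u ≠ mk a := fun h => hu (show mk u ∈ S from h ▸ ha)
    have hub : mk u ≠ mk b := fun h => hu (show mk u ∈ S from h ▸ hb)
    have h1 : G.adj u a ↔ (Pq G h2 hc hcc).adj (mk u) (mk a) :=
      (Pq_adj_iff G h2 hc hcc (fun h => hua ((mk_eq_iff G h2 hc hcc).mpr h))).symm
    have h2' : G.adj u b ↔ (Pq G h2 hc hcc).adj (mk u) (mk b) :=
      (Pq_adj_iff G h2 hc hcc (fun h => hub ((mk_eq_iff G h2 hc hcc).mpr h))).symm
    rw [h1, h2']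
    exact hS (mk u) hu (mk a) ha (mk b) hb
  have hqT : q.out ∈ T := by
    show mk q.out ∈ S
    exact (congrArg (· ∈ S) (Quotient.out_eq q)).mpr hq
  have hrT : r.out ∈ T := by
    show mk r.out ∈ S
    exact (congrArg (· ∈ S) (Quotient.out_eq r)).mpr hrS
  have hTuniv : T = Set.univ := by
    by_contra hTu
    have hTmem : T ∈ properMods G q.out := ⟨hT, hTu, hqT⟩
    have hsub : T ⊆ Mod G q.out := Set.subset_sUnion_of_mem hTmem
    have : r.out ∈ Mod G q.out := hsub hrT
    have : mk q.out = mk r.out := (mk_eq_iff G h2 hc hcc).mpr this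
    have := (Quotient.out_eq q).symm.trans (this.trans (Quotient.out_eq r))
    exact hrq this.symm
  apply hSu
  apply Set.eq_univ_of_forall
  intro s
  have : s.out ∈ T := hTuniv ▸ Set.mem_univ s.out
  have h := (show mk s.out ∈ S from this)
  exact (congrArg (· ∈ S) (Quotient.out_eq s)).mp h

lemma Pq_card2 : 2 ≤ Fintype.card (Pq G h2 hc hcc).V := by
  obtain ⟨v⟩ : Nonempty G.V := by
    rw [← Fintype.card_pos_iff]; omega
  obtain ⟨w, hw⟩ : ∃ w, w ∉ Mod G v := by
    by_contra h
    push_neg at h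
    exact Mod_proper G h2 hc hcc v (Set.eq_univ_of_forall h)
  exact Fintype.one_lt_card_iff.mpr ⟨mk v, mk w,
    fun h => hw ((mk_eq_iff G h2 hc hcc).mp h)⟩

lemma Pq_pair_module_elim {q a b : (Pq G h2 hc hcc).V} (hqa : q ≠ a) (hqb : q ≠ b)
    (hab : a ≠ b) (hcov : ∀ s : (Pq G h2 hc hcc).V, s = q ∨ s = a ∨ s = b)
    (hiff : (Pq G h2 hc hcc).adj q a ↔ (Pq G h2 hc hcc).adj q b) : False := by
  have hM : (Pq G h2 hc hcc).IsModule {a, b} := by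
    intro t ht c hcM d hdM
    have htq : t = q := by
      rcases hcov t with h | h | h
      · exact h
      · exact absurd (by rw [h]; exact Set.mem_insert _ _) ht
      · exact absurd (by rw [h]; exact Set.mem_insert_of_mem _ rfl) ht
    subst htq
    have hval : ∀ c' ∈ ({a, b} : Set (Pq G h2 hc hcc).V),
        ((Pq G h2 hc hcc).adj t c' ↔ (Pq G h2 hc hcc).adj t a) := by
      rintro c' (rfl | rfl)
      · exact Iff.rfl
      · exact hiff.symm
    exact (hval c hcM).trans (hval d hdM).symm
  rcases Pq_trivial_modules G h2 hc hcc {a, b} hM with h | ⟨s, h⟩ | h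
  · exact absurd (h ▸ Set.mem_insert a {b}) (Set.notMem_empty a)
  · have ha : a = s := by rw [← Set.mem_singleton_iff, ← h]; exact Set.mem_insert _ _
    have hb : b = s := by rw [← Set.mem_singleton_iff, ← h]; exact Set.mem_insert_of_mem _ rfl
    exact hab (ha.trans hb.symm)
  · rcases (h ▸ Set.mem_univ q : q ∈ ({a, b} : Set (Pq G h2 hc hcc).V)) with h' | h'
    · exact hqa h'
    · exact hqb h'

lemma Pq_card4 : 4 ≤ Fintype.card (Pq G h2 hc hcc).V := by
  have hcard2 := Pq_card2 G h2 hc hcc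
  by_contra hlt
  have hcases : Fintype.card (Pq G h2 hc hcc).V = 2 ∨
      Fintype.card (Pq G h2 hc hcc).V = 3 := by omega
  rcases hcases with hcard | hcard
  · -- two classes: G would be disconnected or co-disconnected
    obtain ⟨q, r, hqr⟩ :=
      Fintype.one_lt_card_iff.mp (by omega : 1 < Fintype.card (Pq G h2 hc hcc).V)
    have hcover : ∀ s : (Pq G h2 hc hcc).V, s = q ∨ s = r := by
      intro s
      by_contra h
      push_neg at h
      have := Fintype.two_lt_card_iff.mpr ⟨s, q, r, h.1, h.2, hqr⟩
      omega
    have hmkv : mk q.out = q := Quotient.out_eq q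
    have hmkw : mk r.out = r := Quotient.out_eq r
    set S : Set G.V := {x | mk x = q} with hSdef
    have hvS : q.out ∈ S := hmkv
    have hwS : r.out ∉ S := fun h => hqr (hmkw.symm.trans h).symm
    have hcross : ∀ a ∈ S, ∀ b ∈ Sᶜ, (G.adj a b ↔ (Pq G h2 hc hcc).adj q r) := by
      intro a ha b hb
      have hbr : mk b = r := by
        rcases hcover (mk b) with h | h
        · exact absurd h hb
        · exact h
      have hnab : b ∉ Mod G a := by
        intro h
        exact hb (show mk b = q from ((mk_eq_iff G h2 hc hcc).mpr h).symm.trans ha)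
      have h1 := (Pq_adj_iff G h2 hc hcc hnab).symm
      rwa [(ha : mk a = q), hbr] at h1
    by_cases hadj : (Pq G h2 hc hcc).adj q r
    · exact hcc.not_codisc ⟨S, ⟨q.out, hvS⟩, ⟨r.out, hwS⟩,
        fun a ha b hb => (hcross a ha b hb).mpr hadj⟩
    · exact hc.not_disc ⟨S, ⟨q.out, hvS⟩, ⟨r.out, hwS⟩,
        fun a ha b hb h => hadj ((hcross a ha b hb).mp h)⟩
  · -- three classes: some pair is a nontrivial module
    obtain ⟨x, y, z, hxy, hxz, hyz⟩ :=
      (Fintype.two_lt_card_iff (α := (Pq G h2 hc hcc).V)).mp (by omega)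
    have hcover : ∀ s : (Pq G h2 hc hcc).V, s = x ∨ s = y ∨ s = z := by
      intro s
      by_contra h
      push_neg at h
      have := four_le_card h.1 h.2.1 h.2.2 hxy hxz hyz
      omega
    have symm_iff : ∀ a b : (Pq G h2 hc hcc).V,
        ((Pq G h2 hc hcc).adj a b ↔ (Pq G h2 hc hcc).adj b a) :=
      fun a b => ⟨(Pq G h2 hc hcc).symm, (Pq G h2 hc hcc).symm⟩
    have hdisj : (((Pq G h2 hc hcc).adj x y ↔ (Pq G h2 hc hcc).adj x z) ∨
        ((Pq G h2 hc hcc).adj x y ↔ (Pq G h2 hc hcc).adj y z) ∨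
        ((Pq G h2 hc hcc).adj x z ↔ (Pq G h2 hc hcc).adj y z)) := by
      tauto
    rcases hdisj with h | h | h
    · exact Pq_pair_module_elim G h2 hc hcc hxy hxz hyz hcover h
    · exact Pq_pair_module_elim G h2 hc hcc hxy.symm hyz hxz
        (fun s => by rcases hcover s with h1 | h1 | h1 <;> tauto)
        ((symm_iff y x).trans h)
    · exact Pq_pair_module_elim G h2 hc hcc hxz.symm hyz.symm hxy
        (fun s => by rcases hcover s with h1 | h1 | h1 <;> tauto)
        ((symm_iff z x).trans (h.trans (symm_iff y z)))

end MD
end AuxMD5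

noncomputable section AuxMD6
open Relation Classical LGraph

namespace MD

variable (G : LGraph) (h2 : 2 ≤ Fintype.card G.V) (hc : Conn G) (hcc : CoConn G)

local notation "mk" => Quotient.mk (modSetoid G h2 hc hcc)

/-- The induced subgraph on the equivalence class `q`. -/
def fiberG (q : (Pq G h2 hc hcc).V) : LGraph where
  V := {x : G.V // Quotient.mk (modSetoid G h2 hc hcc) x = q}
  fintype := Fintype.ofFinite _
  adj a b := G.adj a.1 b.1
  symm h := G.symm h
  irrefl a := G.irrefl a.1
  label a := G.label a.1

include h2 hc hcc

lemma prime_of_conn : CasePrime G := by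
  set P : LGraph := Pq G h2 hc hcc with hP
  set n : ℕ := Fintype.card P.V with hn
  have e : P.V ≃ Fin n := Fintype.equivFin P.V
  set A : Fin n → LGraph := fun i => fiberG G h2 hc hcc (e.symm i) with hA
  have hprime : P.Prime := ⟨Pq_card2 G h2 hc hcc, Pq_trivial_modules G h2 hc hcc⟩
  have h4 : 4 ≤ n := Pq_card4 G h2 hc hcc
  have hAne : ∀ i, Nonempty (A i).V := fun i => ⟨⟨(e.symm i).out, Quotient.out_eq _⟩⟩
  -- the isomorphism
  have pf : ∀ v : G.V, mk v = e.symm (e (mk v)) := fun v => (e.symm_apply_apply (mk v)).symm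
  have sigma_mk_eq : ∀ {q q' : P.V} (h : q = q') (x : G.V)
      (p : mk x = e.symm (e q)) (p' : mk x = e.symm (e q')),
      (⟨q, ⟨x, p⟩⟩ : Σ r, (A (e r)).V) = ⟨q', ⟨x, p'⟩⟩ := by
    intro q q' h x p p'
    subst h
    exact congrArg _ (Subtype.ext rfl)
  refine ⟨n, P, e, A, hprime, h4, hAne, ⟨⟨⟨?_, ?_, ?_, ?_⟩, ?_, ?_⟩⟩⟩
  · exact fun v => ⟨mk v, ⟨v, pf v⟩⟩
  · exact fun x => x.2.1
  · intro v
    rfl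
  · rintro ⟨q, x, hx⟩
    have hq : mk x = q := by rw [hx, Equiv.symm_apply_apply]
    subst hq
    exact congrArg _ (Subtype.ext rfl)
  · -- adjacency
    intro v w
    by_cases hq : mk v = mk w
    · constructor
      · intro hadj
        refine Or.inl ⟨mk v, ⟨v, pf v⟩, ⟨w, by rw [hq]; exact pf w⟩, rfl, ?_, hadj⟩
        exact (sigma_mk_eq hq.symm w (pf w) _).symm ▸ rfl
      · rintro (⟨u, a, b, hu1, hu2, hab⟩ | ⟨hne, _⟩)
        · have hva : v = a.1 :=
            congrArg (fun z : (Σ r, (A (e r)).V) => z.2.1) hu1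
          have hwb : w = b.1 :=
            congrArg (fun z : (Σ r, (A (e r)).V) => z.2.1) hu2
          rw [hva, hwb]
          exact hab
        · exact absurd hq hne
    · have hwv : w ∉ Mod G v := fun h => hq ((mk_eq_iff G h2 hc hcc).mpr h)
      constructor
      · intro hadj
        exact Or.inr ⟨hq, (Pq_adj_iff G h2 hc hcc hwv).mpr hadj⟩
      · rintro (⟨u, a, b, hu1, hu2, hab⟩ | ⟨hne, hadj⟩)
        · exact absurd (show mk v = mk w from
            (congrArg Sigma.fst hu1).trans (congrArg Sigma.fst hu2).symm) hq
        · exact (Pq_adj_iff G h2 hc hcc hwv).mp hadj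
  · intro v
    rfl

end MD
end AuxMD6
/-- For every non-empty graph `G`, exactly one of the four cases
(i)–(iv) holds. -/
theorem modular_decomposition (G : LGraph) (hG : Nonempty G.V) :
    (CaseSingleton G ∧ ¬ CasePar G ∧ ¬ CaseTensor G ∧ ¬ CasePrime G) ∨
    (¬ CaseSingleton G ∧ CasePar G ∧ ¬ CaseTensor G ∧ ¬ CasePrime G) ∨
    (¬ CaseSingleton G ∧ ¬ CasePar G ∧ CaseTensor G ∧ ¬ CasePrime G) ∨
    (¬ CaseSingleton G ∧ ¬ CasePar G ∧ ¬ CaseTensor G ∧ CasePrime G) := by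
  haveI := hG
  have hpos : 1 ≤ Fintype.card G.V := Fintype.card_pos
  by_cases h1 : Fintype.card G.V = 1
  · have hs : CaseSingleton G := (caseSingleton_iff_card hG).mpr h1
    refine Or.inl ⟨hs, ?_, ?_, ?_⟩
    · intro h; have := casePar_card h; omega
    · intro h; have := caseTensor_card h; omega
    · intro h; have := casePrime_card h; omega
  · have h2 : 2 ≤ Fintype.card G.V := by omega
    have hns : ¬ CaseSingleton G := fun h => h1 ((caseSingleton_iff_card hG).mp h)
    by_cases hd : Disc G
    · refine Or.inr (Or.inl ⟨hns, casePar_iff_disc.mpr hd, ?_, ?_⟩)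
      · intro h
        exact not_disc_codisc G ⟨hd, caseTensor_iff_codisc.mp h⟩
      · intro h
        exact (casePrime_not_disc_codisc h).1 hd
    · by_cases hcd : CoDisc G
      · refine Or.inr (Or.inr (Or.inl ⟨hns, ?_, caseTensor_iff_codisc.mpr hcd, ?_⟩))
        · intro h; exact hd (casePar_iff_disc.mp h)
        · intro h; exact (casePrime_not_disc_codisc h).2 hcd
      · have hconn := conn_of_not_disc hd
        have hcoconn := coconn_of_not_codisc hcd
        refine Or.inr (Or.inr (Or.inr ⟨hns, ?_, ?_, MD.prime_of_conn G h2 hconn hcoconn⟩))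
        · intro h; exact hd (casePar_iff_disc.mp h)
        · intro h; exact hcd (caseTensor_iff_codisc.mp h)
end GSP
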